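/- The function r̂(λ̂) := λ̂² ln(1−λ̂²) − λ̂² ln(λ̂²) + a·λ̂², arising from logit demand with parameter a, is in general not concave on (0,1): for a = 1 there exist points in (0,1) where its second derivative is strictly positive. -/

import Mathlib

noncomputable def gAux (l : ℝ) : ℝ :=
  2*l*Real.log (1 - l^2) - 2*l^3/(1-l^2) - 2*l*Real.log (l^2)

lemma hasDerivAt_fAux {l : ℝ} (hl : l ∈ Set.Ioo (0:ℝ) 1) :
    HasDerivAt (fun l : ℝ =>
        l ^ 2 * Real.log (1 - l ^ 2) - l ^ 2 * Real.log (l ^ 2) + 1 * l ^ 2) (gAux l) l := by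
  obtain ⟨h0, h1'⟩ := hl
  have hden : (1 - l^2) ≠ 0 := by nlinarith
  have hl2 : (l^2 : ℝ) ≠ 0 := by positivity
  have hp : HasDerivAt (fun l:ℝ => l^2) (2*l) l := by simpa using hasDerivAt_pow 2 l
  have h1 : HasDerivAt (fun l:ℝ => 1 - l^2) (-(2*l)) l := hp.const_sub 1
  have hlog1 : HasDerivAt (fun l:ℝ => Real.log (1 - l^2)) (-(2*l)/(1-l^2)) l := h1.log hden
  have hlog2 : HasDerivAt (fun l:ℝ => Real.log (l^2)) ((2*l)/l^2) l := hp.log hl2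
  have H := ((hp.mul hlog1).sub (hp.mul hlog2)).add (hp.const_mul 1)
  refine H.congr_deriv ?_
  unfold gAux
  field_simp
  ring

theorem logit_revenue_sqrt_not_concave :
    ∃ x ∈ Set.Ioo (0:ℝ) 1,
      0 < deriv (deriv (fun l : ℝ =>
        l ^ 2 * Real.log (1 - l ^ 2) - l ^ 2 * Real.log (l ^ 2) + 1 * l ^ 2)) x := by
  set x : ℝ := 1/10 with hx
  have hxmem : x ∈ Set.Ioo (0:ℝ) 1 := by constructor <;> norm_num [hx]
  refine ⟨x, hxmem, ?_⟩
  -- deriv f = gAux near x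
  have heq : deriv (fun l : ℝ =>
        l ^ 2 * Real.log (1 - l ^ 2) - l ^ 2 * Real.log (l ^ 2) + 1 * l ^ 2) =ᶠ[nhds x] gAux := by
    filter_upwards [isOpen_Ioo.mem_nhds hxmem] with y hy
    exact (hasDerivAt_fAux hy).deriv
  rw [heq.deriv_eq]
  -- derivative of gAux at x
  have hden : (1 - x^2) ≠ 0 := by norm_num [hx]
  have hx2 : (x^2 : ℝ) ≠ 0 := by norm_num [hx]
  have hp : HasDerivAt (fun l:ℝ => l^2) (2*x) x := by simpa using hasDerivAt_pow 2 x
  have h1 : HasDerivAt (fun l:ℝ => 1 - l^2) (-(2*x)) x := hp.const_sub 1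
  have hlog1 : HasDerivAt (fun l:ℝ => Real.log (1 - l^2)) (-(2*x)/(1-x^2)) x := h1.log hden
  have hlog2 : HasDerivAt (fun l:ℝ => Real.log (l^2)) ((2*x)/x^2) x := hp.log hx2
  have hid : HasDerivAt (fun l:ℝ => 2*l) 2 x := by simpa using (hasDerivAt_id x).const_mul 2
  have hcube : HasDerivAt (fun l:ℝ => 2*l^3) (2*(3*x^2)) x := by
    simpa [mul_comm, mul_assoc, mul_left_comm] using (hasDerivAt_pow 3 x).const_mul 2
  have hA : HasDerivAt (fun l:ℝ => 2*l*Real.log (1-l^2))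
      (2*Real.log (1-x^2) + 2*x*(-(2*x)/(1-x^2))) x := hid.mul hlog1
  have hB : HasDerivAt (fun l:ℝ => 2*l^3/(1-l^2))
      ((2*(3*x^2)*(1-x^2) - 2*x^3*(-(2*x)))/(1-x^2)^2) x := hcube.div h1 hden
  have hC : HasDerivAt (fun l:ℝ => 2*l*Real.log (l^2))
      (2*Real.log (x^2) + 2*x*((2*x)/x^2)) x := hid.mul hlog2
  have hG : HasDerivAt gAux
      ((2*Real.log (1-x^2) + 2*x*(-(2*x)/(1-x^2)))
        - (2*(3*x^2)*(1-x^2) - 2*x^3*(-(2*x)))/(1-x^2)^2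
        - (2*Real.log (x^2) + 2*x*((2*x)/x^2))) x := (hA.sub hB).sub hC
  rw [hG.deriv]
  -- numeric bounds
  have e1 : (1 - x^2 : ℝ) = 99/100 := by norm_num [hx]
  have e2 : (x^2 : ℝ) = 1/100 := by norm_num [hx]
  rw [e1, e2, hx]
  have hL2 : Real.log ((1:ℝ)/100) = - Real.log 100 := by
    rw [one_div, Real.log_inv]
  have h100 : (6:ℝ) * Real.log 2 ≤ Real.log 100 := by
    have : Real.log (2^6) ≤ Real.log 100 := by
      apply Real.log_le_log (by norm_num) (by norm_num)
    simpa [Real.log_pow] using this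
  have hlog2gt : (0.6931471803 : ℝ) < Real.log 2 := Real.log_two_gt_d9
  have hL1 : -(1/99 : ℝ) ≤ Real.log (99/100) := by
    have h : (99/100:ℝ) = ((100/99:ℝ))⁻¹ := by norm_num
    rw [h, Real.log_inv]
    have := Real.log_le_sub_one_of_pos (show (0:ℝ) < 100/99 by norm_num)
    linarith
  rw [hL2]
  nlinarith [hL1, h100, hlog2gt]
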